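/- (Upper parameter bound) Assume p ≠ q and for some integer r with 0 ≤ r ≤ min{p,q}: α·(2pq/(p+q) − r) ≤ r·ℓ − τ, where τ = (2pq/(p+q))(μV − μW). Then: if μV − μW < ℓ, α ≤ −(2·max{p,q}/|q−p|)(μV − μW) + ((p+q)/|q−p|)·ℓ; and if μV − μW ≥ ℓ, α ≤ −(μV − μW). -/

import Mathlib

set_option maxHeartbeats 1000000 in
theorem upper_parameter_bound (p q : ℕ) (hp : 0 < p) (hq : 0 < q) (hpq : p ≠ q)
    (μV μW α ℓ : ℝ) (hℓ : 0 < ℓ) (r : ℤ)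
    (hr0 : 0 ≤ r) (hrm : r ≤ (min p q : ℕ))
    (h : α * (2 * (p : ℝ) * q / (p + q) - (r : ℝ))
          ≤ (r : ℝ) * ℓ - (2 * (p : ℝ) * q / (p + q)) * (μV - μW)) :
    (μV - μW < ℓ →
      α ≤ -(2 * ((max p q : ℕ) : ℝ) / |(q : ℝ) - p|) * (μV - μW)
            + (((p : ℝ) + q) / |(q : ℝ) - p|) * ℓ)
    ∧ (μV - μW ≥ ℓ → α ≤ -(μV - μW)) := by
  have hP : (0:ℝ) < p := by exact_mod_cast hp
  have hQ : (0:ℝ) < q := by exact_mod_cast hq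
  have hS : (0:ℝ) < (p:ℝ) + q := by linarith
  have hR0 : (0:ℝ) ≤ (r:ℝ) := by exact_mod_cast hr0
  have hRmin : (r:ℝ) ≤ min (p:ℝ) (q:ℝ) := by
    have : (r:ℝ) ≤ ((min p q : ℕ) : ℝ) := by exact_mod_cast hrm
    simpa [Nat.cast_min] using this
  set d := μV - μW with hd
  have h' : α * (2*(p:ℝ)*q - r*((p:ℝ)+q)) ≤ (r:ℝ)*ℓ*((p:ℝ)+q) - 2*(p:ℝ)*q*d := by
    have hne : ((p:ℝ)+q) ≠ 0 := hS.ne'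
    calc α * (2*(p:ℝ)*q - r*((p:ℝ)+q))
        = (α * (2*(p:ℝ)*q/((p:ℝ)+q) - r)) * ((p:ℝ)+q) := by field_simp
      _ ≤ ((r:ℝ)*ℓ - (2*(p:ℝ)*q/((p:ℝ)+q))*d) * ((p:ℝ)+q) :=
          mul_le_mul_of_nonneg_right h hS.le
      _ = (r:ℝ)*ℓ*((p:ℝ)+q) - 2*(p:ℝ)*q*d := by field_simp
  rcases Nat.lt_or_ge p q with hlt | hge
  · -- p < q
    have hPQ : (p:ℝ) < q := by exact_mod_cast hlt
    have hRP : (r:ℝ) ≤ p := le_trans hRmin (min_le_left _ _)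
    have hX : (0:ℝ) < 2*(p:ℝ)*q - r*((p:ℝ)+q) := by nlinarith
    have habs : |(q:ℝ) - p| = (q:ℝ) - p := abs_of_pos (by linarith)
    have hmax : ((max p q : ℕ) : ℝ) = (q:ℝ) := by
      rw [Nat.cast_max]; exact max_eq_right hPQ.le
    constructor
    · intro hdl
      have key : α * ((q:ℝ) - p) ≤ -(2*(q:ℝ))*d + ((p:ℝ)+q)*ℓ := by
        nlinarith [mul_le_mul_of_nonneg_right h' (by linarith : (0:ℝ) ≤ (q:ℝ) - p),
          mul_nonneg (mul_nonneg (mul_nonneg (by norm_num : (0:ℝ) ≤ 2) hQ.le)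
            (by linarith : (0:ℝ) ≤ (p:ℝ) - r))
            (by linarith : (0:ℝ) ≤ ℓ - d)]
      rw [habs, hmax]
      have heq : -(2 * (q:ℝ) / ((q:ℝ) - p)) * d + ((p:ℝ) + q) / ((q:ℝ) - p) * ℓ
          = (-(2*(q:ℝ))*d + ((p:ℝ)+q)*ℓ) / ((q:ℝ) - p) := by
        field_simp
      rw [heq, le_div_iff₀ (by linarith : (0:ℝ) < (q:ℝ) - p)]
      linarith [key]
    · intro hdg
      have key : (-d - α) * (2*(p:ℝ)*q - r*((p:ℝ)+q)) ≥ 0 := by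
        nlinarith [mul_nonneg (mul_nonneg hR0 hS.le) (by linarith : (0:ℝ) ≤ d - ℓ)]
      have h0 : (0:ℝ) * (2*(p:ℝ)*q - r*((p:ℝ)+q)) ≤ (-d - α) * (2*(p:ℝ)*q - r*((p:ℝ)+q)) := by
        rw [zero_mul]; exact key
      have := le_of_mul_le_mul_right h0 hX
      linarith
  · -- q < p (since hge : q ≤ p and p ≠ q)
    have hQP : (q:ℝ) < p := by
      have : q < p := lt_of_le_of_ne hge (fun hh => hpq hh.symm)
      exact_mod_cast this
    have hRQ : (r:ℝ) ≤ q := le_trans hRmin (min_le_right _ _)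
    have hX : (0:ℝ) < 2*(p:ℝ)*q - r*((p:ℝ)+q) := by nlinarith
    have habs : |(q:ℝ) - p| = (p:ℝ) - q := by
      rw [abs_of_neg (by linarith : (q:ℝ) - p < 0)]; ring
    have hmax : ((max p q : ℕ) : ℝ) = (p:ℝ) := by
      rw [Nat.cast_max]; exact max_eq_left hQP.le
    constructor
    · intro hdl
      have key : α * ((p:ℝ) - q) ≤ -(2*(p:ℝ))*d + ((p:ℝ)+q)*ℓ := by
        have hnn : (0:ℝ) ≤ 2*(p:ℝ)*((p:ℝ)+q)*((q:ℝ)-r)*(ℓ-d) :=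
          mul_nonneg (mul_nonneg (mul_nonneg (by positivity) (by linarith)) (by linarith))
            (by linarith)
        have h1 := mul_le_mul_of_nonneg_right h' (by linarith : (0:ℝ) ≤ (p:ℝ) - q)
        have h3 : (α*((p:ℝ)-q)) * (2*(p:ℝ)*q - r*((p:ℝ)+q))
            ≤ (-(2*(p:ℝ))*d + ((p:ℝ)+q)*ℓ) * (2*(p:ℝ)*q - r*((p:ℝ)+q)) := by nlinarith [h1, hnn]
        exact le_of_mul_le_mul_right h3 hX
      rw [habs, hmax]
      have heq : -(2 * (p:ℝ) / ((p:ℝ) - q)) * d + ((p:ℝ) + q) / ((p:ℝ) - q) * ℓ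
          = (-(2*(p:ℝ))*d + ((p:ℝ)+q)*ℓ) / ((p:ℝ) - q) := by
        field_simp
      rw [heq, le_div_iff₀ (by linarith : (0:ℝ) < (p:ℝ) - q)]
      linarith [key]
    · intro hdg
      have key : (-d - α) * (2*(p:ℝ)*q - r*((p:ℝ)+q)) ≥ 0 := by
        nlinarith [mul_nonneg (mul_nonneg hR0 hS.le) (by linarith : (0:ℝ) ≤ d - ℓ)]
      have h0 : (0:ℝ) * (2*(p:ℝ)*q - r*((p:ℝ)+q)) ≤ (-d - α) * (2*(p:ℝ)*q - r*((p:ℝ)+q)) := by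
        rw [zero_mul]; exact key
      have := le_of_mul_le_mul_right h0 hX
      linarith
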